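/- Let w_1, …, w_{r−1}, z_r, …, z_{N−1}, y_1, …, y_N be complex numbers with the w's pairwise distinct, the y's pairwise distinct, and all denominators below nonzero. Then Σ_{p=1}^{r−1} Π_{a=1, a≠p}^{r−1} [1/(w_p − w_a)] · Π_{b=r}^{N−1} (z_b − w_p) / Π_{b=1}^{N} (y_b − w_p) = Σ_{ℓ=1}^{N} Π_{b=r}^{N−1} (z_b − y_ℓ) / Π_{a=1}^{r−1} (y_ℓ − w_a) · Π_{b=1, b≠ℓ}^{N} [1/(y_b − y_ℓ)], provided 2 ≤ r ≤ N. -/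

import Mathlib

open Finset Polynomial

lemma aux_basis_coeff_top {ι : Type*} [DecidableEq ι] (s : Finset ι) (v : ι → ℂ)
    (hvs : Set.InjOn v s) {i : ι} (hi : i ∈ s) :
    (Lagrange.basis s v i).coeff (#s - 1) = ∏ j ∈ s.erase i, (v i - v j)⁻¹ := by
  rw [← Lagrange.natDegree_basis hvs hi, Polynomial.coeff_natDegree, Lagrange.basis,
    Polynomial.leadingCoeff_prod]
  refine Finset.prod_congr rfl fun j hj => ?_
  rw [Lagrange.basisDivisor, Polynomial.leadingCoeff_mul, Polynomial.leadingCoeff_C,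
    Polynomial.leadingCoeff_X_sub_C, mul_one]

lemma aux_sum_eval_mul_prod_inv {ι : Type*} [DecidableEq ι] (s : Finset ι) (v : ι → ℂ)
    (hvs : Set.InjOn v s) (P : Polynomial ℂ) (hP : P.degree < ((#s - 1 : ℕ) : WithBot ℕ)) :
    ∑ i ∈ s, P.eval (v i) * ∏ j ∈ s.erase i, (v i - v j)⁻¹ = 0 := by
  have h1 : P.degree < (#s : ℕ) :=
    lt_of_lt_of_le hP (by exact_mod_cast Nat.sub_le #s 1)
  have h2 := Lagrange.eq_interpolate hvs h1
  have h3 := congrArg (fun q => Polynomial.coeff q (#s - 1)) h2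
  simp only [Lagrange.interpolate_apply, Polynomial.finset_sum_coeff,
    Polynomial.coeff_C_mul] at h3
  rw [Polynomial.coeff_eq_zero_of_degree_lt hP] at h3
  calc ∑ i ∈ s, P.eval (v i) * ∏ j ∈ s.erase i, (v i - v j)⁻¹
      = ∑ i ∈ s, P.eval (v i) * (Lagrange.basis s v i).coeff (#s - 1) :=
        Finset.sum_congr rfl fun i hi => by rw [aux_basis_coeff_top s v hvs hi]
    _ = 0 := h3.symm

lemma aux_disjSum_erase_inl {α β : Type*} [DecidableEq α] [DecidableEq β]
    (s : Finset α) (t : Finset β) (a : α) :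
    (s.disjSum t).erase (Sum.inl a) = (s.erase a).disjSum t := by
  ext x; cases x <;> simp [Finset.mem_erase, and_comm]

lemma aux_disjSum_erase_inr {α β : Type*} [DecidableEq α] [DecidableEq β]
    (s : Finset α) (t : Finset β) (b : β) :
    (s.disjSum t).erase (Sum.inr b) = s.disjSum (t.erase b) := by
  ext x; cases x <;> simp [Finset.mem_erase, and_comm]

theorem kappa_residue_identity (N r : ℕ) (hr : 2 ≤ r) (hrN : r ≤ N)
    (w z y : ℕ → ℂ)
    (hw : ∀ p ∈ Finset.Icc 1 (r - 1), ∀ a ∈ Finset.Icc 1 (r - 1), p ≠ a → w p ≠ w a)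
    (hy : ∀ b ∈ Finset.Icc 1 N, ∀ l ∈ Finset.Icc 1 N, b ≠ l → y b ≠ y l)
    (hyw : ∀ b ∈ Finset.Icc 1 N, ∀ p ∈ Finset.Icc 1 (r - 1), y b - w p ≠ 0) :
    ∑ p ∈ Finset.Icc 1 (r - 1),
        (∏ a ∈ (Finset.Icc 1 (r - 1)).erase p, (1 / (w p - w a))) *
          ((∏ b ∈ Finset.Icc r (N - 1), (z b - w p)) /
            (∏ b ∈ Finset.Icc 1 N, (y b - w p)))
      = ∑ ℓ ∈ Finset.Icc 1 N,
          ((∏ b ∈ Finset.Icc r (N - 1), (z b - y ℓ)) /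
              (∏ a ∈ Finset.Icc 1 (r - 1), (y ℓ - w a))) *
            ∏ b ∈ (Finset.Icc 1 N).erase ℓ, (1 / (y b - y ℓ)) := by
  classical
  set A : Finset ℕ := Finset.Icc 1 (r - 1) with hA
  set B : Finset ℕ := Finset.Icc 1 N with hB
  set s : Finset (ℕ ⊕ ℕ) := A.disjSum B with hs
  set v : ℕ ⊕ ℕ → ℂ := Sum.elim w y with hv
  set P : Polynomial ℂ := ∏ b ∈ Finset.Icc r (N - 1), (C (z b) - X) with hPdef
  have hcardA : #A = r - 1 := by simp [hA]
  have hcardB : #B = N := by simp [hB]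
  have hcards : #s = (r - 1) + N := by simp [hs, hcardA, hcardB]
  -- injectivity
  have hinj : Set.InjOn v s := by
    rintro (p | b) hx (q | c) hy' hxy <;>
      simp only [Finset.mem_coe, hs, Finset.inl_mem_disjSum, Finset.inr_mem_disjSum] at hx hy' <;>
      simp only [hv, Sum.elim_inl, Sum.elim_inr] at hxy
    · exact congrArg Sum.inl (by by_contra hne; exact hw p hx q hy' hne hxy)
    · exact ((sub_ne_zero.mp (hyw c hy' p hx)) hxy.symm).elim
    · exact ((sub_ne_zero.mp (hyw b hx q hy')) hxy).elim
    · exact congrArg Sum.inr (by by_contra hne; exact hy b hx c hy' hne hxy)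
  -- degree bound
  have hdeg : P.degree < ((#s - 1 : ℕ) : WithBot ℕ) := by
    have h1 : P.degree ≤ ((#(Finset.Icc r (N - 1)) : ℕ) : WithBot ℕ) := by
      apply le_trans (Polynomial.degree_prod_le _ _)
      have : ∀ b ∈ Finset.Icc r (N - 1), (C (z b) - X : Polynomial ℂ).degree = ((1 : ℕ) : WithBot ℕ) := by
        intro b _; rw [← neg_sub, Polynomial.degree_neg, Polynomial.degree_X_sub_C]; rfl
      rw [Finset.sum_congr rfl this, ← Nat.cast_sum, Finset.sum_const, smul_eq_mul, mul_one]
    refine lt_of_le_of_lt h1 ?_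
    rw [Nat.cast_lt, hcards, Nat.card_Icc]
    omega
  have H := aux_sum_eval_mul_prod_inv s v hinj P hdeg
  rw [hs, Finset.sum_disjSum] at H
  have hNpow : ((-1 : ℂ)) ^ N ≠ 0 := pow_ne_zero _ (by norm_num)
  -- rewrite the inl part
  have hL : ∀ p ∈ A,
      P.eval (v (Sum.inl p)) * ∏ j ∈ (A.disjSum B).erase (Sum.inl p), (v (Sum.inl p) - v j)⁻¹
        = (-1) ^ N * ((∏ a ∈ A.erase p, (1 / (w p - w a))) *
            ((∏ b ∈ Finset.Icc r (N - 1), (z b - w p)) / (∏ b ∈ B, (y b - w p)))) := by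
    intro p hp
    rw [aux_disjSum_erase_inl, Finset.prod_disjSum]
    simp only [hv, Sum.elim_inl, Sum.elim_inr]
    have e1 : P.eval (w p) = ∏ b ∈ Finset.Icc r (N - 1), (z b - w p) := by
      rw [hPdef, Polynomial.eval_prod]; exact Finset.prod_congr rfl fun b _ => by simp
    have e2 : ∏ b ∈ B, (w p - y b)⁻¹ = (-1) ^ N * (∏ b ∈ B, (y b - w p))⁻¹ := by
      have h : ∀ b ∈ B, (w p - y b)⁻¹ = (-1) * (y b - w p)⁻¹ := by
        intro b _; rw [neg_one_mul, ← inv_neg, neg_sub]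
      rw [Finset.prod_congr rfl h, Finset.prod_mul_distrib, Finset.prod_const, hcardB,
        Finset.prod_inv_distrib]
    have eW : ∏ a ∈ A.erase p, (w p - w a)⁻¹ = (∏ a ∈ A.erase p, (w p - w a))⁻¹ :=
      Finset.prod_inv_distrib _
    have eW' : ∏ a ∈ A.erase p, (1 / (w p - w a)) = (∏ a ∈ A.erase p, (w p - w a))⁻¹ := by
      rw [Finset.prod_congr rfl fun a _ => one_div (w p - w a), Finset.prod_inv_distrib]
    rw [e1, e2, eW, eW', div_eq_mul_inv]
    ring
  have hR : ∀ ℓ ∈ B,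
      P.eval (v (Sum.inr ℓ)) * ∏ j ∈ (A.disjSum B).erase (Sum.inr ℓ), (v (Sum.inr ℓ) - v j)⁻¹
        = -((-1) ^ N * (((∏ b ∈ Finset.Icc r (N - 1), (z b - y ℓ)) /
              (∏ a ∈ A, (y ℓ - w a))) * ∏ b ∈ B.erase ℓ, (1 / (y b - y ℓ)))) := by
    intro ℓ hℓ
    rw [aux_disjSum_erase_inr, Finset.prod_disjSum]
    simp only [hv, Sum.elim_inl, Sum.elim_inr]
    have e1 : P.eval (y ℓ) = ∏ b ∈ Finset.Icc r (N - 1), (z b - y ℓ) := by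
      rw [hPdef, Polynomial.eval_prod]; exact Finset.prod_congr rfl fun b _ => by simp
    have hsign : ((-1 : ℂ)) ^ (N - 1) = -((-1) ^ N) := by
      rw [show N = (N - 1) + 1 from by omega, pow_succ]
      simp
    have e2 : ∏ b ∈ B.erase ℓ, (y ℓ - y b)⁻¹
        = -((-1) ^ N) * (∏ b ∈ B.erase ℓ, (y b - y ℓ))⁻¹ := by
      have h : ∀ b ∈ B.erase ℓ, (y ℓ - y b)⁻¹ = (-1) * (y b - y ℓ)⁻¹ := by
        intro b _; rw [neg_one_mul, ← inv_neg, neg_sub]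
      rw [Finset.prod_congr rfl h, Finset.prod_mul_distrib, Finset.prod_const,
        Finset.card_erase_of_mem hℓ, hcardB, hsign, Finset.prod_inv_distrib]
    have eA : ∏ a ∈ A, (y ℓ - w a)⁻¹ = (∏ a ∈ A, (y ℓ - w a))⁻¹ := Finset.prod_inv_distrib _
    have eE : ∏ b ∈ B.erase ℓ, (1 / (y b - y ℓ)) = (∏ b ∈ B.erase ℓ, (y b - y ℓ))⁻¹ := by
      rw [Finset.prod_congr rfl fun b _ => one_div (y b - y ℓ), Finset.prod_inv_distrib]
    rw [e1, e2, eA, eE, div_eq_mul_inv]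
    ring
  rw [Finset.sum_congr rfl hL, Finset.sum_congr rfl hR, ← Finset.mul_sum,
    Finset.sum_neg_distrib, ← Finset.mul_sum] at H
  have H2 : ((-1 : ℂ)) ^ N * (∑ p ∈ A, (∏ a ∈ A.erase p, (1 / (w p - w a))) *
      ((∏ b ∈ Finset.Icc r (N - 1), (z b - w p)) / (∏ b ∈ B, (y b - w p))))
      = ((-1 : ℂ)) ^ N * (∑ ℓ ∈ B, ((∏ b ∈ Finset.Icc r (N - 1), (z b - y ℓ)) /
          (∏ a ∈ A, (y ℓ - w a))) * ∏ b ∈ B.erase ℓ, (1 / (y b - y ℓ))) := by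
    linear_combination H
  exact mul_left_cancel₀ hNpow H2
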